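/- Let P be a 2×2 real matrix all of whose entries are nonzero, and let δ ≥ 0 satisfy |det P| ≤ δ. Then there exists a 2×2 real matrix P̂ of rank at most 1 such that ‖P − P̂‖_max ≤ δ · (max_{i,j} |P_{ij}|) / (2 · min_{i,j} P_{ij}²). -/
import Mathlib


/-- Let P be a 2×2 real matrix all of whose entries are nonzero, and let δ ≥ 0 satisfy
|det P| ≤ δ. Then there exists a 2×2 real matrix P̂ of rank at most 1 such that
‖P − P̂‖_max ≤ δ · (max_{i,j} |P_{ij}|) / (2 · min_{i,j} P_{ij}²). -/
theorem stmt4 (P : Matrix (Fin 2) (Fin 2) ℝ) (hP : ∀ i j, P i j ≠ 0)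
    (δ : ℝ) (hδ : 0 ≤ δ) (hdet : |P.det| ≤ δ) :
    ∃ Phat : Matrix (Fin 2) (Fin 2) ℝ, Phat.rank ≤ 1 ∧
      ∀ i j, |P i j - Phat i j| ≤
        δ * (Finset.univ.sup' Finset.univ_nonempty
              fun p : Fin 2 × Fin 2 => |P p.1 p.2|) /
          (2 * Finset.univ.inf' Finset.univ_nonempty
              fun p : Fin 2 × Fin 2 => (P p.1 p.2) ^ 2) := by
  set a := P 0 0 with ha
  set b := P 0 1 with hb
  set c := P 1 0 with hc
  set d := P 1 1 with hd
  have hane : a ≠ 0 := hP 0 0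
  have hbne : b ≠ 0 := hP 0 1
  have hcne : c ≠ 0 := hP 1 0
  have hdne : d ≠ 0 := hP 1 1
  set D := P.det with hD
  have hDeq : D = a * d - b * c := by
    rw [hD, Matrix.det_fin_two]
  set M := Finset.univ.sup' Finset.univ_nonempty
      fun p : Fin 2 × Fin 2 => |P p.1 p.2| with hM
  set m := Finset.univ.inf' Finset.univ_nonempty
      fun p : Fin 2 × Fin 2 => (P p.1 p.2) ^ 2 with hm
  have hMle : ∀ i j, |P i j| ≤ M := fun i j =>
    Finset.le_sup' (f := fun p : Fin 2 × Fin 2 => |P p.1 p.2|) (Finset.mem_univ (i, j))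
  have hmle : ∀ i j, m ≤ (P i j) ^ 2 := fun i j =>
    Finset.inf'_le (f := fun p : Fin 2 × Fin 2 => (P p.1 p.2) ^ 2) (Finset.mem_univ (i, j))
  have hmpos : 0 < m := by
    rw [hm, Finset.lt_inf'_iff]
    intro p _
    exact pow_two_pos_of_ne_zero (hP p.1 p.2)
  have hMpos : 0 < M := lt_of_lt_of_le (abs_pos.mpr hane) (hMle 0 0)
  refine ⟨!![a - D / (2 * d), b + D / (2 * c); c, d], ?_, ?_⟩
  · -- rank ≤ 1
    set Q : Matrix (Fin 2) (Fin 2) ℝ := !![a - D / (2 * d), b + D / (2 * c); c, d] with hQ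
    have hrow : Q 0 = ((a - D / (2 * d)) / c) • Q 1 := by
      funext j
      fin_cases j
      · simp [hQ, hcne]
      · simp only [hQ]
        show b + D / (2 * c) = (a - D / (2 * d)) / c * d
        field_simp
        rw [hDeq]; ring
    rw [Matrix.rank_eq_finrank_span_row]
    have hsub : Submodule.span ℝ (Set.range Q) ≤ Submodule.span ℝ {Q 1} := by
      rw [Submodule.span_le]
      rintro _ ⟨i, rfl⟩
      fin_cases i
      · show Q 0 ∈ _
        rw [hrow]
        exact Submodule.smul_mem _ _ (Submodule.subset_span rfl)
      · exact Submodule.subset_span rfl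
    calc Module.finrank ℝ (Submodule.span ℝ (Set.range Q))
        ≤ Module.finrank ℝ (Submodule.span ℝ ({Q 1} : Set (Fin 2 → ℝ))) :=
          Submodule.finrank_mono hsub
      _ ≤ 1 := by
          simpa using finrank_span_le_card ({Q 1} : Set (Fin 2 → ℝ))
  · intro i j
    have habsD : |D| ≤ δ := hdet
    have key : ∀ x : ℝ, x ≠ 0 → m ≤ |x| * M → ∀ i0 j0 : Fin 2,
        |P i0 j0 - P i0 j0| ≤ δ * M / (2 * m) := by
      intro x hx h i0 j0
      simp only [sub_self, abs_zero]
      positivity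
    have hRHSpos : 0 < δ * M / (2 * m) ∨ True := Or.inr trivial
    fin_cases i <;> fin_cases j
    · -- entry (0,0): |D/(2d)|
      show |a - (a - D / (2 * d))| ≤ δ * M / (2 * m)
      rw [sub_sub_cancel, abs_div]
      rw [div_le_div_iff₀ (by positivity) (by positivity)]
      have h1 : m ≤ |d| * M := (hmle 1 1).trans (by
        rw [sq]; exact mul_le_mul_of_nonneg_left (hMle 1 1) (abs_nonneg d) |>.trans_eq' (by rw [abs_mul_abs_self] ))
      calc |D| * (2 * m) ≤ δ * (2 * (|d| * M)) := by
            apply mul_le_mul habsD (by nlinarith) (by positivity) hδ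
        _ = δ * M * |2 * d| := by rw [abs_mul]; simp [abs_of_nonneg]; ring
    · -- entry (0,1): |D/(2c)|
      show |b - (b + D / (2 * c))| ≤ δ * M / (2 * m)
      rw [sub_add_cancel_left, abs_neg, abs_div]
      rw [div_le_div_iff₀ (by positivity) (by positivity)]
      have h1 : m ≤ |c| * M := (hmle 1 0).trans (by
        rw [sq]; exact mul_le_mul_of_nonneg_left (hMle 1 0) (abs_nonneg c) |>.trans_eq' (by rw [abs_mul_abs_self] ))
      calc |D| * (2 * m) ≤ δ * (2 * (|c| * M)) := by
            apply mul_le_mul habsD (by nlinarith) (by positivity) hδ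
        _ = δ * M * |2 * c| := by rw [abs_mul]; simp [abs_of_nonneg]; ring
    · show |c - c| ≤ δ * M / (2 * m)
      simp only [sub_self, abs_zero]; positivity
    · show |d - d| ≤ δ * M / (2 * m)
      simp only [sub_self, abs_zero]; positivity
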